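/- arXiv:1506.04682 — 2 statements merged into one kernel-verified Lean document; each statement's English description precedes it below -/
import Mathlib

section
/- For the triangle connection coefficients, c_{j,m}^{(13)}(κ) = (−1)^{m+j} c_{j,m}^{(12)}((23)κ), where (23)κ = (κ₁,κ₃,κ₂). -/
open Finset

/-- Pochhammer symbol `(a)_n = a(a+1)⋯(a+n-1)`. -/
noncomputable def poch (a : ℝ) (n : ℕ) : ℝ := ∏ k ∈ Finset.range n, (a + k)

/-- Terminating Gauss hypergeometric sum `₂F₁(-n, b; c; z)`. -/
noncomputable def F21 (n : ℕ) (b c z : ℝ) : ℝ :=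
  ∑ k ∈ Finset.range (n + 1),
    poch (-(n : ℝ)) k * poch b k / (poch c k * (Nat.factorial k : ℝ)) * z ^ k

/-- Terminating hypergeometric sum `₄F₃(-m, X, Y, Z; U, V, W; 1)`. -/
noncomputable def F43 (m : ℕ) (X Y Z U V W : ℝ) : ℝ :=
  ∑ k ∈ Finset.range (m + 1),
    poch (-(m : ℝ)) k * poch X k * poch Y k * poch Z k /
      (poch U k * poch V k * poch W k * (Nat.factorial k : ℝ))

/-- Classical Jacobi polynomial `P_n^{(α,β)}`. -/
noncomputable def jacobiP (α β : ℝ) (n : ℕ) (x : ℝ) : ℝ :=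
  poch (α + 1) n / (Nat.factorial n : ℝ) *
    ∑ k ∈ Finset.range (n + 1),
      poch (-(n : ℝ)) k * poch ((n : ℝ) + α + β + 1) k /
        (poch (α + 1) k * (Nat.factorial k : ℝ)) * ((1 - x) / 2) ^ k

/-- The Jacobi basis on the triangle. -/
noncomputable def triP (κ₁ κ₂ κ₃ : ℝ) (n m : ℕ) (x₁ x₂ : ℝ) : ℝ :=
  jacobiP (κ₂ + κ₃ + 2 * (m : ℝ) + 1) κ₁ (n - m) (2 * x₁ - 1) *
    (1 - x₁) ^ m * jacobiP κ₃ κ₂ m (2 * x₂ / (1 - x₁) - 1)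

/-- The triangle Jacobi basis transformed by the transposition (12). -/
noncomputable def triP12 (κ₁ κ₂ κ₃ : ℝ) (n j : ℕ) (x₁ x₂ : ℝ) : ℝ :=
  jacobiP (κ₁ + κ₃ + 2 * (j : ℝ) + 1) κ₂ (n - j) (2 * x₂ - 1) *
    (1 - x₂) ^ j * jacobiP κ₃ κ₁ j (2 * x₁ / (1 - x₂) - 1)

/-- The triangle Jacobi basis transformed by the transposition (13). -/
noncomputable def triP13 (κ₁ κ₂ κ₃ : ℝ) (n j : ℕ) (x₁ x₂ : ℝ) : ℝ :=
  jacobiP (κ₁ + κ₂ + 2 * (j : ℝ) + 1) κ₃ (n - j) (1 - 2 * x₁ - 2 * x₂) *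
    (x₁ + x₂) ^ j * jacobiP κ₁ κ₂ j (2 * x₂ / (x₁ + x₂) - 1)

lemma poch_zero (a : ℝ) : poch a 0 = 1 := by simp [poch]

lemma poch_succ (a : ℝ) (n : ℕ) : poch a (n + 1) = poch a n * (a + n) := by
  simp [poch, Finset.prod_range_succ]

lemma poch_pos {a : ℝ} (ha : 0 < a) (n : ℕ) : 0 < poch a n := by
  apply Finset.prod_pos
  intro i _
  positivity

lemma poch_ne_zero {a : ℝ} (ha : 0 < a) (n : ℕ) : poch a n ≠ 0 := (poch_pos ha n).ne'

lemma poch_add (a : ℝ) (m n : ℕ) : poch a (m + n) = poch a m * poch (a + m) n := by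
  simp only [poch, Finset.prod_range_add]
  congr 1
  refine Finset.prod_congr rfl fun i _ => ?_
  push_cast; ring

noncomputable def desc (a : ℝ) (n : ℕ) : ℝ := ∏ k ∈ Finset.range n, (a - k)

lemma desc_succ (a : ℝ) (n : ℕ) : desc a (n + 1) = desc a n * (a - n) := by
  simp [desc, Finset.prod_range_succ]

lemma poch_eq_desc (a : ℝ) (n : ℕ) : poch a n = desc (a + n - 1) n := by
  rw [poch, desc, ← Finset.prod_range_reflect]
  refine Finset.prod_congr rfl fun i hi => ?_
  rw [Finset.mem_range] at hi
  have : (↑(n - 1 - i) : ℝ) = (n : ℝ) - 1 - i := by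
    rw [Nat.cast_sub (by omega), Nat.cast_sub (by omega : 1 ≤ n)]
    push_cast; ring
  rw [this]; ring

lemma vandermonde_desc (a b : ℝ) (k : ℕ) :
    desc (a + b) k = ∑ s ∈ Finset.range (k + 1), (k.choose s : ℝ) * desc a (k - s) * desc b s := by
  induction k with
  | zero => simp [desc]
  | succ k ih =>
    rw [desc_succ, ih, Finset.sum_mul]
    have expand : ∀ s ∈ Finset.range (k + 1),
        (k.choose s : ℝ) * desc a (k - s) * desc b s * (a + b - k)
          = (k.choose s : ℝ) * desc a (k - s + 1) * desc b s
            + (k.choose s : ℝ) * desc a (k - s) * desc b (s + 1) := by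
      intro s hs
      rw [Finset.mem_range, Nat.lt_succ_iff] at hs
      rw [desc_succ, desc_succ]
      have : ((k : ℝ) - s) + s = k := by ring
      have hc : ((k - s : ℕ) : ℝ) = (k : ℝ) - s := by push_cast [Nat.cast_sub hs]; ring
      rw [hc]; ring
    rw [Finset.sum_congr rfl expand, Finset.sum_add_distrib]
    have hS1 : ∑ s ∈ Finset.range (k + 1), (k.choose s : ℝ) * desc a (k - s + 1) * desc b s
        = desc a (k + 1)
          + ∑ s ∈ Finset.range k, (k.choose (s + 1) : ℝ) * desc a (k - s) * desc b (s + 1) := by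
      rw [Finset.sum_range_succ' (fun s => (k.choose s : ℝ) * desc a (k - s + 1) * desc b s)]
      rw [add_comm]
      congr 1
      · simp [desc]
      · refine Finset.sum_congr rfl fun s hs => ?_
        rw [Finset.mem_range] at hs
        have h2 : k - (s + 1) + 1 = k - s := by omega
        rw [h2]
    have hT : ∑ s ∈ Finset.range (k + 2), ((k + 1).choose s : ℝ) * desc a (k + 1 - s) * desc b s
        = desc a (k + 1)
          + (∑ s ∈ Finset.range (k + 1), (k.choose s : ℝ) * desc a (k - s) * desc b (s + 1)
             + ∑ s ∈ Finset.range k, (k.choose (s + 1) : ℝ) * desc a (k - s) * desc b (s + 1)) := by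
      rw [Finset.sum_range_succ'
        (fun s => ((k + 1).choose s : ℝ) * desc a (k + 1 - s) * desc b s)]
      rw [add_comm]
      congr 1
      · simp [desc]
      have step : ∀ s ∈ Finset.range (k + 1),
          ((k + 1).choose (s + 1) : ℝ) * desc a (k + 1 - (s + 1)) * desc b (s + 1)
            = (k.choose s : ℝ) * desc a (k - s) * desc b (s + 1)
              + (k.choose (s + 1) : ℝ) * desc a (k - s) * desc b (s + 1) := by
        intro s hs
        rw [Nat.choose_succ_succ]
        have : k + 1 - (s + 1) = k - s := by omega
        rw [this]
        push_cast
        ring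
      rw [Finset.sum_congr rfl step, Finset.sum_add_distrib]
      congr 1
      rw [Finset.sum_range_succ]
      simp [Nat.choose_succ_self]
    rw [hT, hS1]
    ring

lemma key_identity (α β : ℝ) (n k : ℕ) :
    poch ((n:ℝ) + α + β + 1) k
      = ∑ s ∈ Finset.range (k+1),
          (k.choose s : ℝ) * poch (α + s + 1) (k - s) * poch (β + n - s + 1) s := by
  have h1 : poch ((n:ℝ)+α+β+1) k = desc ((α + k) + (β + n)) k := by
    rw [poch_eq_desc]; congr 1; push_cast; ring
  rw [h1, vandermonde_desc]
  refine Finset.sum_congr rfl fun s hs => ?_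
  rw [Finset.mem_range, Nat.lt_succ_iff] at hs
  have e1 : desc (α + k) (k - s) = poch (α + s + 1) (k - s) := by
    rw [poch_eq_desc]; congr 1; rw [Nat.cast_sub hs]; push_cast; ring
  have e2 : desc (β + n) s = poch (β + n - s + 1) s := by
    rw [poch_eq_desc]; congr 1; push_cast; ring
  rw [e1, e2]

lemma poch_neg_nat (n : ℕ) : ∀ k, k ≤ n →
    poch (-(n:ℝ)) k = (-1)^k * ((n.factorial : ℝ) / ((n - k).factorial : ℝ)) := by
  intro k
  induction k with
  | zero =>
    intro _
    have : (n.factorial : ℝ) ≠ 0 := by positivity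
    simp [poch_zero, div_self this]
  | succ k ih =>
    intro h
    rw [poch_succ, ih (by omega)]
    have hfacn : (n - k).factorial = (n - k) * (n - (k+1)).factorial := by
      have h2 : n - k = (n - (k+1)) + 1 := by omega
      rw [h2, Nat.factorial_succ, ← h2]
    rw [hfacn]
    have hnk : ((n - k : ℕ) : ℝ) = (n:ℝ) - k := by rw [Nat.cast_sub (by omega)]
    have hne : ((n - k : ℕ) : ℝ) ≠ 0 := by
      have h3 : 0 < n - k := by omega
      exact_mod_cast h3.ne'
    have hfne : ((n - (k+1)).factorial : ℝ) ≠ 0 := by positivity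
    push_cast
    rw [hnk] at hne ⊢
    field_simp
    ring

lemma jacobi_sym_form (α β : ℝ) (hα : -1 < α) (n : ℕ) (x : ℝ) :
    jacobiP α β n x = ∑ s ∈ Finset.range (n+1),
      poch (α + s + 1) (n - s) / ((n - s).factorial : ℝ)
        * (poch (β + n - s + 1) s / (s.factorial : ℝ))
        * ((x-1)/2)^s * ((x+1)/2)^(n-s) := by
  have hα1 : (0:ℝ) < α + 1 := by linarith
  set z : ℝ := (1 - x)/2 with hz
  have hx1 : (x - 1)/2 = -z := by rw [hz]; ring
  have hx2 : (x + 1)/2 = 1 - z := by rw [hz]; ring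
  set T : ℕ → ℝ := fun s => poch (α + s + 1) (n - s) / ((n - s).factorial : ℝ)
        * (poch (β + n - s + 1) s / (s.factorial : ℝ)) with hT
  set g : ℕ → ℕ → ℝ := fun s i => T s * ((n-s).choose i : ℝ) * (-z)^(s+i) with hg
  have expand : ∀ s ∈ Finset.range (n+1),
      T s * ((x-1)/2)^s * ((x+1)/2)^(n-s) = ∑ i ∈ Finset.range (n+1-s), g s i := by
    intro s hs
    rw [Finset.mem_range, Nat.lt_succ_iff] at hs
    rw [hx1, hx2]
    have : (1 - z) = (-z) + 1 := by ring
    rw [this, add_pow]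
    have hr : n - s + 1 = n + 1 - s := by omega
    rw [Finset.mul_sum, ← hr]
    refine Finset.sum_congr rfl fun i _ => ?_
    simp only [hg, one_pow, pow_add]
    ring
  calc jacobiP α β n x
      = ∑ k ∈ Finset.range (n+1), poch (α + 1) n / (n.factorial : ℝ) *
          (poch (-(n : ℝ)) k * poch ((n : ℝ) + α + β + 1) k /
            (poch (α + 1) k * (k.factorial : ℝ)) * z ^ k) := by
        rw [jacobiP, Finset.mul_sum]
    _ = ∑ k ∈ Finset.range (n+1), ∑ s ∈ Finset.range (k+1), g s (k - s) := by
        refine Finset.sum_congr rfl fun k hk => ?_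
        rw [Finset.mem_range, Nat.lt_succ_iff] at hk
        rw [poch_neg_nat n k hk, key_identity α β n k, Finset.mul_sum, Finset.sum_div, Finset.sum_mul, Finset.mul_sum]
        refine Finset.sum_congr rfl fun s hs => ?_
        rw [Finset.mem_range, Nat.lt_succ_iff] at hs
        simp only [hg, hT]
        have hsk : s + (k - s) = k := by omega
        rw [hsk]
        have hpa : poch (α+1) n = poch (α+1) k * poch (α+1+k) (n-k) := by
          rw [← poch_add]
          congr 1
          omega
        have hps : poch (α + s + 1) (n - s)
            = poch (α + s + 1) (k - s) * poch (α+1+k) (n-k) := by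
          have h1 : (k - s) + (n - k) = n - s := by omega
          rw [← h1, poch_add]
          congr 2
          rw [Nat.cast_sub hs]
          ring
        have hc1 : ((k.choose s : ℕ) : ℝ)
            = (k.factorial : ℝ) / ((s.factorial : ℝ) * ((k-s).factorial : ℝ)) :=
          Nat.cast_choose ℝ hs
        have hc2 : (((n-s).choose (k-s) : ℕ) : ℝ)
            = ((n-s).factorial : ℝ) / (((k-s).factorial : ℝ) * ((n-k).factorial : ℝ)) := by
          have h2 : (n - s) - (k - s) = n - k := by omega
          rw [Nat.cast_choose ℝ (by omega : k - s ≤ n - s), h2]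
        rw [hpa, hps, hc1, hc2]
        have f1 : (n.factorial : ℝ) ≠ 0 := by positivity
        have f2 : (k.factorial : ℝ) ≠ 0 := by positivity
        have f3 : (s.factorial : ℝ) ≠ 0 := by positivity
        have f4 : ((k-s).factorial : ℝ) ≠ 0 := by positivity
        have f5 : ((n-k).factorial : ℝ) ≠ 0 := by positivity
        have f6 : ((n-s).factorial : ℝ) ≠ 0 := by positivity
        have f7 : poch (α+1) k ≠ 0 := poch_ne_zero hα1 k
        have f8 : ((n.factorial : ℝ) / ((n-k).factorial : ℝ)) = n.factorial / (n-k).factorial := rfl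
        have hneg : (-z)^k = (-1)^k * z^k := by rw [neg_pow]
        rw [hneg]
        field_simp
    _ = ∑ s ∈ Finset.range (n+1), ∑ i ∈ Finset.range (n+1-s), g s i :=
        Finset.sum_range_diag_flip (n+1) g
    _ = ∑ s ∈ Finset.range (n+1),
          T s * ((x-1)/2)^s * ((x+1)/2)^(n-s) := by
        rw [Finset.sum_congr rfl expand]
    _ = _ := by rw [hT]

lemma jacobi_symm (α β : ℝ) (hα : -1 < α) (hβ : -1 < β) (n : ℕ) (x : ℝ) :
    jacobiP α β n (-x) = (-1:ℝ)^n * jacobiP β α n x := by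
  rw [jacobi_sym_form α β hα n (-x), jacobi_sym_form β α hβ n x, Finset.mul_sum,
    ← Finset.sum_range_reflect (fun s => (-1:ℝ)^n *
      (poch (β + s + 1) (n - s) / ((n - s).factorial : ℝ)
        * (poch (α + n - s + 1) s / (s.factorial : ℝ))
        * ((x-1)/2)^s * ((x+1)/2)^(n-s))) (n+1)]
  refine Finset.sum_congr rfl fun s hs => ?_
  rw [Finset.mem_range, Nat.lt_succ_iff] at hs
  have h1 : n + 1 - 1 - s = n - s := by omega
  have h2 : n - (n - s) = s := by omega
  rw [h1, h2, Nat.cast_sub hs]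
  have a1 : ((-x-1)/2 : ℝ) = -((x+1)/2) := by ring
  have a2 : ((-x+1)/2 : ℝ) = -((x-1)/2) := by ring
  have a3 : ((-1:ℝ))^s * ((-1:ℝ))^(n-s) = (-1)^n := by
    rw [← pow_add]
    congr 1
    omega
  calc poch (α + s + 1) (n - s) / ((n-s).factorial : ℝ)
        * (poch (β + n - s + 1) s / (s.factorial : ℝ)) * ((-x-1)/2)^s * ((-x+1)/2)^(n-s)
      = ((-1:ℝ)^s * (-1)^(n-s)) * (poch (α + s + 1) (n - s) / ((n-s).factorial : ℝ)
        * (poch (β + n - s + 1) s / (s.factorial : ℝ))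
        * ((x+1)/2)^s * ((x-1)/2)^(n-s)) := by
        rw [a1, a2, neg_pow ((x+1)/2), neg_pow ((x-1)/2)]; ring
    _ = _ := by
        rw [a3]
        have hcast : β + ((n:ℝ) - s) + 1 = β + n - s + 1 := by ring
        have hcast2 : α + (n:ℝ) - ((n:ℝ) - s) + 1 = α + s + 1 := by ring
        rw [hcast, hcast2]
        ring

lemma jacobiP_one (α β : ℝ) (n : ℕ) :
    jacobiP α β n 1 = poch (α+1) n / (n.factorial : ℝ) := by
  rw [jacobiP]
  have h0 : ((1 - 1)/2 : ℝ) = 0 := by norm_num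
  rw [h0, Finset.sum_eq_single 0]
  · simp [poch_zero]
  · intro k _ hk
    simp [zero_pow hk]
  · intro h
    simp at h

noncomputable def jpoly (α β : ℝ) (k : ℕ) : Polynomial ℝ :=
  Polynomial.C (poch (α+1) k / (k.factorial : ℝ)) *
    ∑ j ∈ Finset.range (k+1),
      Polynomial.C (poch (-(k:ℝ)) j * poch ((k:ℝ)+α+β+1) j
          / (poch (α+1) j * (j.factorial : ℝ))) *
        (1 - Polynomial.X)^j

lemma jpoly_eval (α β : ℝ) (k : ℕ) (y : ℝ) :
    (jpoly α β k).eval y = jacobiP α β k (2*y - 1) := by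
  rw [jpoly, jacobiP]
  have h1 : ((1 - (2*y - 1))/2 : ℝ) = 1 - y := by ring
  rw [h1]
  simp [Polynomial.eval_finset_sum]

lemma jpoly_natDegree_le (α β : ℝ) (k : ℕ) : (jpoly α β k).natDegree ≤ k := by
  refine le_trans (Polynomial.natDegree_mul_le) ?_
  rw [Polynomial.natDegree_C, zero_add]
  refine Polynomial.natDegree_sum_le_of_forall_le _ _ fun j hj => ?_
  rw [Finset.mem_range, Nat.lt_succ_iff] at hj
  refine le_trans (Polynomial.natDegree_mul_le) ?_
  rw [Polynomial.natDegree_C, zero_add]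
  refine le_trans (Polynomial.natDegree_pow_le) ?_
  have : (1 - Polynomial.X : Polynomial ℝ).natDegree ≤ 1 := by
    refine le_trans (Polynomial.natDegree_sub_le _ _) ?_
    simp
  calc j * (1 - Polynomial.X : Polynomial ℝ).natDegree ≤ j * 1 := by
        exact Nat.mul_le_mul_left j this
    _ ≤ k := by omega

lemma coeff_one_sub_X_pow (k : ℕ) :
    ((1 - Polynomial.X : Polynomial ℝ)^k).coeff k = (-1)^k := by
  have h1 : (1 - Polynomial.X : Polynomial ℝ) = -(Polynomial.X - Polynomial.C 1) := by
    simp [Polynomial.C_1]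
  rw [h1, neg_pow]
  have hm : ((Polynomial.X - Polynomial.C (1:ℝ))^k).Monic :=
    (Polynomial.monic_X_sub_C (1:ℝ)).pow k
  have hd : ((Polynomial.X - Polynomial.C (1:ℝ))^k).natDegree = k := by
    rw [Polynomial.natDegree_pow, Polynomial.natDegree_X_sub_C, mul_one]
  have : ((Polynomial.X - Polynomial.C (1:ℝ))^k).coeff k = 1 := by
    have := hm.leadingCoeff
    rwa [Polynomial.leadingCoeff, hd] at this
  rw [show ((-1 : Polynomial ℝ))^k = Polynomial.C ((-1:ℝ)^k) by
    rw [← Polynomial.C_1, ← Polynomial.C_neg, ← Polynomial.C_pow]]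
  rw [Polynomial.coeff_C_mul, this, mul_one]

lemma jpoly_coeff (α β : ℝ) (hα : -1 < α) (k : ℕ) :
    (jpoly α β k).coeff k = poch ((k:ℝ)+α+β+1) k / (k.factorial : ℝ) := by
  rw [jpoly, Polynomial.coeff_C_mul, Polynomial.finset_sum_coeff]
  rw [Finset.sum_eq_single k]
  · rw [Polynomial.coeff_C_mul, coeff_one_sub_X_pow]
    rw [poch_neg_nat k k le_rfl]
    simp only [Nat.sub_self, Nat.factorial_zero, Nat.cast_one, div_one]
    have f2 : (k.factorial : ℝ) ≠ 0 := by positivity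
    have f7 : poch (α+1) k ≠ 0 := poch_ne_zero (by linarith) k
    field_simp
    ring_nf
    have hsq : ((-1:ℝ))^(k*2) = 1 := by rw [mul_comm, pow_mul]; norm_num
    rw [hsq, mul_one]
  · intro j hj hjk
    rw [Finset.mem_range, Nat.lt_succ_iff] at hj
    have hlt : j < k := lt_of_le_of_ne hj hjk
    rw [Polynomial.coeff_C_mul]
    have : ((1 - Polynomial.X : Polynomial ℝ)^j).coeff k = 0 := by
      apply Polynomial.coeff_eq_zero_of_natDegree_lt
      refine lt_of_le_of_lt ?_ hlt
      refine le_trans (Polynomial.natDegree_pow_le) ?_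
      have h1 : (1 - Polynomial.X : Polynomial ℝ).natDegree ≤ 1 := by
        refine le_trans (Polynomial.natDegree_sub_le _ _) ?_
        simp
      calc j * (1 - Polynomial.X : Polynomial ℝ).natDegree ≤ j * 1 :=
            Nat.mul_le_mul_left j h1
        _ = j := mul_one j
    rw [this, mul_zero]
  · intro h
    simp at h

lemma indep (p : ℕ → Polynomial ℝ) (hdeg : ∀ m, (p m).natDegree ≤ m) :
    ∀ N (e : ℕ → ℝ), (∀ m ≤ N, (p m).coeff m ≠ 0) →
      (∑ m ∈ Finset.range (N+1), Polynomial.C (e m) * p m) = 0 → ∀ m ≤ N, e m = 0 := by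
  intro N
  induction N with
  | zero =>
    intro e hc h m hm
    interval_cases m
    have := congrArg (fun q => Polynomial.coeff q 0) h
    simp only [zero_add, Finset.range_one, Finset.sum_singleton, Polynomial.coeff_C_mul,
      Polynomial.coeff_zero] at this
    exact (mul_eq_zero.mp this).resolve_right (hc 0 le_rfl)
  | succ N ih =>
    intro e hc h
    have coeff_zero_of_lt : ∀ m, m < N + 1 → (p m).coeff (N+1) = 0 := fun m hm =>
      Polynomial.coeff_eq_zero_of_natDegree_lt (lt_of_le_of_lt (hdeg m) hm)
    have htop : e (N+1) = 0 := by
      have h2 := congrArg (fun q => Polynomial.coeff q (N+1)) h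
      simp only [Polynomial.finset_sum_coeff, Polynomial.coeff_C_mul,
        Polynomial.coeff_zero] at h2
      rw [Finset.sum_eq_single (N+1)] at h2
      · exact (mul_eq_zero.mp h2).resolve_right (hc (N+1) le_rfl)
      · intro m hm hne
        rw [Finset.mem_range] at hm
        rw [coeff_zero_of_lt m (by omega), mul_zero]
      · intro hmem
        simp at hmem
    have hsum : (∑ m ∈ Finset.range (N+1), Polynomial.C (e m) * p m) = 0 := by
      rw [Finset.sum_range_succ, htop] at h
      simpa using h
    intro m hm
    rcases Nat.lt_succ_iff_lt_or_eq.mp (Nat.lt_succ_of_le hm) with h' | h'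
    · exact ih e (fun m' hm' => hc m' (by omega)) hsum m (by omega)
    · rw [h']; exact htop

lemma sub13 (κ₁ κ₂ κ₃ : ℝ) (hκ₁ : -1 < κ₁) (hκ₂ : -1 < κ₂) (n j : ℕ) (x₁ x₂ : ℝ)
    (hx : x₁ + x₂ ≠ 0) :
    triP13 κ₁ κ₂ κ₃ n j x₁ x₂ = (-1:ℝ)^j * triP12 κ₁ κ₃ κ₂ n j x₁ (1 - x₁ - x₂) := by
  rw [triP13, triP12]
  have e1 : 2 * (1 - x₁ - x₂) - 1 = 1 - 2*x₁ - 2*x₂ := by ring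
  have e2 : 1 - (1 - x₁ - x₂) = x₁ + x₂ := by ring
  rw [e1, e2]
  have e3 : 2 * x₁ / (x₁ + x₂) - 1 = -(2 * x₂ / (x₁ + x₂) - 1) := by
    field_simp
    ring
  rw [e3, jacobi_symm κ₂ κ₁ hκ₂ hκ₁ j _]
  have h5 : ((-1:ℝ))^(j*2) = 1 := by rw [mul_comm, pow_mul]; norm_num
  linear_combination (-(jacobiP (κ₁ + κ₂ + 2 * (j:ℝ) + 1) κ₃ (n - j) (1 - 2*x₁ - 2*x₂)
    * (x₁ + x₂)^j * jacobiP κ₁ κ₂ j (2 * x₂ / (x₁ + x₂) - 1))) * h5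

lemma subT (κ₁ κ₂ κ₃ : ℝ) (hκ₂ : -1 < κ₂) (hκ₃ : -1 < κ₃) (n m : ℕ) (x₁ x₂ : ℝ)
    (hx : x₁ ≠ 1) :
    triP κ₁ κ₃ κ₂ n m x₁ (1 - x₁ - x₂) = (-1:ℝ)^m * triP κ₁ κ₂ κ₃ n m x₁ x₂ := by
  rw [triP, triP]
  have h1 : (1 - x₁) ≠ 0 := sub_ne_zero.mpr (Ne.symm hx)
  have e1 : κ₃ + κ₂ + 2 * (m:ℝ) + 1 = κ₂ + κ₃ + 2 * (m:ℝ) + 1 := by ring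
  have e3 : 2 * (1 - x₁ - x₂) / (1 - x₁) - 1 = -(2 * x₂ / (1 - x₁) - 1) := by
    field_simp
    ring
  rw [e1, e3, jacobi_symm κ₂ κ₃ hκ₂ hκ₃ m _]
  ring

/-- `c_{j,m}^{(13)}(κ) = (-1)^{m+j} c_{j,m}^{(12)}((23)κ)` where `(23)κ = (κ₁,κ₃,κ₂)`:
if `c13` is the family of connection coefficients expressing the `(13)`-basis in the
standard basis with parameter `κ`, and `c12` the family expressing the `(12)`-basis in the
standard basis with parameter `(23)κ`, then `c13 j m = (-1)^{m+j} c12 j m`. -/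
theorem stmt_8 (κ₁ κ₂ κ₃ : ℝ) (hκ₁ : -1 < κ₁) (hκ₂ : -1 < κ₂) (hκ₃ : -1 < κ₃)
    (n : ℕ) (c13 c12 : ℕ → ℕ → ℝ)
    (h13 : ∀ j ≤ n, ∀ x₁ x₂ : ℝ, x₁ ≠ 1 → x₂ ≠ 1 → x₁ + x₂ ≠ 0 →
      triP13 κ₁ κ₂ κ₃ n j x₁ x₂ =
        ∑ m ∈ Finset.range (n + 1), c13 j m * triP κ₁ κ₂ κ₃ n m x₁ x₂)
    (h12 : ∀ j ≤ n, ∀ x₁ x₂ : ℝ, x₁ ≠ 1 → x₂ ≠ 1 → x₁ + x₂ ≠ 0 →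
      triP12 κ₁ κ₃ κ₂ n j x₁ x₂ =
        ∑ m ∈ Finset.range (n + 1), c12 j m * triP κ₁ κ₃ κ₂ n m x₁ x₂) :
    ∀ j ≤ n, ∀ m ≤ n, c13 j m = (-1 : ℝ) ^ (m + j) * c12 j m := by
  intro j hj
  set d : ℕ → ℝ := fun m => c13 j m - (-1:ℝ)^(m+j) * c12 j m with hd
  set A : ℕ → ℝ := fun m => jacobiP (κ₂ + κ₃ + 2 * (m:ℝ) + 1) κ₁ (n - m) (-1) with hA
  have triP0 : ∀ (m : ℕ) (x₂ : ℝ),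
      triP κ₁ κ₂ κ₃ n m 0 x₂ = A m * (jpoly κ₃ κ₂ m).eval x₂ := by
    intro m x₂
    rw [triP, jpoly_eval, hA]
    norm_num
  have hApos : ∀ m : ℕ, A m ≠ 0 := by
    intro m
    have hα : (-1:ℝ) < κ₂ + κ₃ + 2 * (m:ℝ) + 1 := by
      have : (0:ℝ) ≤ (m:ℝ) := Nat.cast_nonneg m
      linarith
    have hsym := jacobi_symm (κ₂ + κ₃ + 2 * (m:ℝ) + 1) κ₁ hα hκ₁ (n - m) 1
    rw [hA]
    simp only
    rw [hsym, jacobiP_one]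
    have p1 : poch (κ₁ + 1) (n - m) ≠ 0 := poch_ne_zero (by linarith) _
    have p2 : (((n-m).factorial : ℕ) : ℝ) ≠ 0 := by positivity
    have p3 : ((-1:ℝ))^(n-m) ≠ 0 := by
      apply pow_ne_zero; norm_num
    exact mul_ne_zero p3 (div_ne_zero p1 p2)
  have step1 : ∀ x₂ : ℝ, x₂ ≠ 0 → x₂ ≠ 1 →
      ∑ m ∈ Finset.range (n+1), d m * triP κ₁ κ₂ κ₃ n m 0 x₂ = 0 := by
    intro x₂ h0 h1
    have hx13 := h13 j hj 0 x₂ (by norm_num) h1 (by simpa using h0)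
    have hx12 := h12 j hj 0 (1 - 0 - x₂) (by norm_num)
      (by intro hc; apply h0; linarith)
      (by intro hc; apply h1; linarith)
    have hs13 : triP13 κ₁ κ₂ κ₃ n j 0 x₂
        = (-1:ℝ)^j * triP12 κ₁ κ₃ κ₂ n j 0 (1 - 0 - x₂) :=
      sub13 κ₁ κ₂ κ₃ hκ₁ hκ₂ n j 0 x₂ (by simpa using h0)
    have hsT : ∀ m' : ℕ, triP κ₁ κ₃ κ₂ n m' 0 (1 - 0 - x₂)
        = (-1:ℝ)^m' * triP κ₁ κ₂ κ₃ n m' 0 x₂ :=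
      fun m' => subT κ₁ κ₂ κ₃ hκ₂ hκ₃ n m' 0 x₂ (by norm_num)
    have e : ∀ mm ∈ Finset.range (n+1),
        d mm * triP κ₁ κ₂ κ₃ n mm 0 x₂
          = c13 j mm * triP κ₁ κ₂ κ₃ n mm 0 x₂
            - (-1:ℝ)^j * (c12 j mm * triP κ₁ κ₃ κ₂ n mm 0 (1 - 0 - x₂)) := by
      intro mm _
      rw [hsT mm, hd]
      simp only
      rw [pow_add]
      ring
    rw [Finset.sum_congr rfl e, Finset.sum_sub_distrib, ← hx13, ← Finset.mul_sum, ← hx12, hs13]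
    ring
  set Q : Polynomial ℝ :=
    ∑ m ∈ Finset.range (n+1), Polynomial.C (d m * A m) * jpoly κ₃ κ₂ m with hQ
  have hQeval : ∀ x₂ : ℝ, x₂ ≠ 0 → x₂ ≠ 1 → Q.eval x₂ = 0 := by
    intro x₂ h0 h1
    rw [hQ, Polynomial.eval_finset_sum]
    rw [← step1 x₂ h0 h1]
    refine Finset.sum_congr rfl fun m _ => ?_
    rw [Polynomial.eval_mul, Polynomial.eval_C, triP0 m x₂]
    ring
  have hQ0 : Q = 0 := by
    apply Polynomial.eq_zero_of_infinite_isRoot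
    have hfin : ({(0:ℝ), 1} : Set ℝ).Finite := (Set.finite_singleton 1).insert 0
    have hinf : (({(0:ℝ), 1} : Set ℝ)ᶜ).Infinite := hfin.infinite_compl
    apply hinf.mono
    intro x hx
    simp only [Set.mem_compl_iff, Set.mem_insert_iff, Set.mem_singleton_iff, not_or] at hx
    exact hQeval x hx.1 hx.2
  have hcoeff : ∀ m ≤ n, (jpoly κ₃ κ₂ m).coeff m ≠ 0 := by
    intro m _
    rw [jpoly_coeff κ₃ κ₂ hκ₃ m]
    have hp : poch ((m:ℝ) + κ₃ + κ₂ + 1) m ≠ 0 := by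
      apply Finset.prod_ne_zero_iff.mpr
      intro i hi
      rw [Finset.mem_range] at hi
      have h1 : (1:ℝ) ≤ (m:ℝ) := by exact_mod_cast Nat.one_le_iff_ne_zero.mpr (by omega)
      have h2 : (0:ℝ) ≤ (i:ℝ) := Nat.cast_nonneg i
      exact ne_of_gt (by linarith)
    have hf : ((m.factorial : ℕ) : ℝ) ≠ 0 := by positivity
    exact div_ne_zero hp hf
  have hdz := indep (fun m => jpoly κ₃ κ₂ m) (fun m => jpoly_natDegree_le κ₃ κ₂ m) n
    (fun m => d m * A m) hcoeff hQ0
  intro m hm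
  have := hdz m hm
  have hdm : d m = 0 := by
    rcases mul_eq_zero.mp this with h | h
    · exact h
    · exact absurd h (hApos m)
  rw [hd] at hdm
  simp only at hdm
  linarith
end

section
/- For the dual Krawtchouk parameters ρ̃_j = ρ_{d+1−j}(1−|ρ|)/[(1−|ρ_{d+1−j}^{(partial)}|)(1−|ρ_{d−j}^{(partial)}|)] one has the identity ∑_{j=1}^d ρ̃_j = ∑_{j=1}^d ρ_j, i.e., |ρ̃| = |ρ|. -/
open Finset

/-- The dual Krawtchouk parameters (0-based indexing via `Fin.rev`). -/
noncomputable def dualRho (d : ℕ) (ρ : Fin d → ℝ) : Fin d → ℝ :=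
  fun j =>
    ρ (Fin.rev j) * (1 - ∑ i, ρ i) /
      ((1 - ∑ i ∈ Finset.univ.filter (fun i : Fin d => (i : ℕ) ≤ ((Fin.rev j : Fin d) : ℕ)), ρ i) *
        (1 - ∑ i ∈ Finset.univ.filter (fun i : Fin d => (i : ℕ) < ((Fin.rev j : Fin d) : ℕ)), ρ i))


theorem stmt_15' (d : ℕ) (ρ : Fin d → ℝ)
    (hρ : ∀ i, 0 < ρ i ∧ ρ i < 1) (hρs : ∑ i, ρ i < 1) :
    ∑ j : Fin d, (ρ (Fin.rev j) * (1 - ∑ i, ρ i) /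
      ((1 - ∑ i ∈ Finset.univ.filter (fun i : Fin d => (i : ℕ) ≤ ((Fin.rev j : Fin d) : ℕ)), ρ i) *
        (1 - ∑ i ∈ Finset.univ.filter (fun i : Fin d => (i : ℕ) < ((Fin.rev j : Fin d) : ℕ)), ρ i)))
      = ∑ j, ρ j := by
  set S := ∑ i, ρ i with hS
  set T : ℕ → ℝ := fun k => ∑ i ∈ Finset.univ.filter (fun i : Fin d => (i : ℕ) < k), ρ i with hT
  have hT0 : T 0 = 0 := by simp [hT]
  have hTd : T d = S := by
    simp only [hT, hS]
    apply Finset.sum_congr _ (fun _ _ => rfl)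
    ext i; simp [i.isLt]
  have hTle : ∀ k, T k ≤ S := by
    intro k
    rw [hS]
    apply Finset.sum_le_sum_of_subset_of_nonneg (Finset.filter_subset _ _)
    intro i _ _; exact (hρ i).1.le
  have hpos : ∀ k, (0:ℝ) < 1 - T k := fun k => by linarith [hTle k]
  have hstep : ∀ m : Fin d, T (m + 1) - T m = ρ m := by
    intro m
    have : Finset.univ.filter (fun i : Fin d => (i : ℕ) < (m:ℕ) + 1)
        = insert m (Finset.univ.filter (fun i : Fin d => (i : ℕ) < (m:ℕ))) := by
      ext i
      simp [Nat.lt_succ_iff_lt_or_eq, Fin.ext_iff, or_comm]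
      rw [Fin.le_iff_val_le_val, Fin.lt_iff_val_lt_val]; omega
    simp only [hT, this]
    rw [Finset.sum_insert (by simp)]
    ring
  set f : ℕ → ℝ := fun k => (1 - S) / (1 - T k) with hf
  have hterm : ∀ m : Fin d, ρ m * (1 - S) /
      ((1 - ∑ i ∈ Finset.univ.filter (fun i : Fin d => (i : ℕ) ≤ (m:ℕ)), ρ i) *
        (1 - ∑ i ∈ Finset.univ.filter (fun i : Fin d => (i : ℕ) < (m:ℕ)), ρ i))
      = f (m + 1) - f m := by
    intro m
    have hle : (Finset.univ.filter (fun i : Fin d => (i : ℕ) ≤ (m:ℕ)))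
        = Finset.univ.filter (fun i : Fin d => (i : ℕ) < (m:ℕ) + 1) := by
      ext i; simp [Nat.lt_succ_iff]
    rw [hle]
    have h1 := hpos (m + 1)
    have h2 := hpos m
    have hρm := hstep m
    show ρ m * (1 - S) / ((1 - T (m+1)) * (1 - T m)) = _
    rw [hf]
    field_simp
    nlinarith [hρm]
  calc ∑ j : Fin d, (ρ (Fin.rev j) * (1 - S) /
      ((1 - ∑ i ∈ Finset.univ.filter (fun i : Fin d => (i : ℕ) ≤ ((Fin.rev j : Fin d) : ℕ)), ρ i) *
        (1 - ∑ i ∈ Finset.univ.filter (fun i : Fin d => (i : ℕ) < ((Fin.rev j : Fin d) : ℕ)), ρ i)))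
      = ∑ j : Fin d, (f ((Fin.rev j : ℕ) + 1) - f (Fin.rev j)) := by
        exact Finset.sum_congr rfl (fun j _ => hterm (Fin.rev j))
    _ = ∑ m : Fin d, (f ((m:ℕ) + 1) - f m) := Equiv.sum_comp Fin.revPerm (fun m : Fin d => f ((m:ℕ)+1) - f m)
    _ = ∑ k ∈ Finset.range d, (f (k + 1) - f k) := Fin.sum_univ_eq_sum_range (fun k => f (k + 1) - f k) d
    _ = f d - f 0 := Finset.sum_range_sub f d
    _ = S := by
        rw [hf]; simp only [hT0, hTd]
        have : (1:ℝ) - S ≠ 0 := by linarith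
        field_simp
        ring

/-- The dual Krawtchouk parameters have the same total sum: `|ρ̃| = |ρ|`. -/
theorem stmt_15 (d : ℕ) (ρ : Fin d → ℝ)
    (hρ : ∀ i, 0 < ρ i ∧ ρ i < 1) (hρs : ∑ i, ρ i < 1) :
    ∑ j, dualRho d ρ j = ∑ j, ρ j := by
  simp only [dualRho]
  exact stmt_15' d ρ hρ hρs
end
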